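/- Let g_r, g_b be nonzero vectors in ℝ² (or ℝ^d) with cos φ = ⟨g_r, g_b⟩/(‖g_r‖‖g_b‖) > -1. Let G be the d×2 matrix with columns g_r and g_b. Then v = (v₁, v₂) with v₁ = (1/√(1 + cos φ))·(1/‖g_r‖) and v₂ = (1/√(1 + cos φ))·(1/‖g_b‖) satisfies GᵀG v = (1/v₁, 1/v₂)ᵀ, and G v = (1/√(1 + cos φ))·(g_r/‖g_r‖ + g_b/‖g_b‖). -/

import Mathlib

open RealInnerProductSpace

theorem stmt15 {d : ℕ} (g_r g_b : EuclideanSpace ℝ (Fin d))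
    (hr : g_r ≠ 0) (hb : g_b ≠ 0)
    (cosφ : ℝ) (hcos : cosφ = ⟪g_r, g_b⟫ / (‖g_r‖ * ‖g_b‖))
    (hcosgt : cosφ > -1)
    (G : Matrix (Fin d) (Fin 2) ℝ)
    (hG : G = Matrix.of fun i j => if j = 0 then g_r i else g_b i)
    (v : Fin 2 → ℝ)
    (hv0 : v 0 = (1 / Real.sqrt (1 + cosφ)) * (1 / ‖g_r‖))
    (hv1 : v 1 = (1 / Real.sqrt (1 + cosφ)) * (1 / ‖g_b‖)) :
    (G.transpose * G).mulVec v = (fun j => 1 / v j) ∧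
    G.mulVec v = fun i =>
      (1 / Real.sqrt (1 + cosφ)) * (g_r i / ‖g_r‖ + g_b i / ‖g_b‖) := by
  have hnr : (0:ℝ) < ‖g_r‖ := norm_pos_iff.mpr hr
  have hnb : (0:ℝ) < ‖g_b‖ := norm_pos_iff.mpr hb
  have hc : (0:ℝ) < 1 + cosφ := by linarith
  have hs : 0 < Real.sqrt (1 + cosφ) := Real.sqrt_pos.mpr hc
  have hs2 : Real.sqrt (1 + cosφ) * Real.sqrt (1 + cosφ) = 1 + cosφ :=
    Real.mul_self_sqrt hc.le
  have hip : ⟪g_r, g_b⟫ = cosφ * (‖g_r‖ * ‖g_b‖) := by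
    rw [hcos]; field_simp
  have hsum_rb : ∑ i, g_r i * g_b i = cosφ * (‖g_r‖ * ‖g_b‖) := by
    rw [← hip, PiLp.inner_apply]
    simp [RCLike.inner_apply, mul_comm]
  have hsum_rr : ∑ i, g_r i * g_r i = ‖g_r‖ * ‖g_r‖ := by
    rw [← real_inner_self_eq_norm_mul_norm, PiLp.inner_apply]
    simp [RCLike.inner_apply, sq]
  have hsum_bb : ∑ i, g_b i * g_b i = ‖g_b‖ * ‖g_b‖ := by
    rw [← real_inner_self_eq_norm_mul_norm, PiLp.inner_apply]
    simp [RCLike.inner_apply, sq]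
  constructor
  · funext j
    fin_cases j
    · simp [Matrix.mulVec, Matrix.mul_apply, dotProduct, Fin.sum_univ_two, hG,
        hv0, hv1, ← Finset.sum_mul, mul_comm]
      rw [hsum_rr, hsum_rb]
      field_simp
      linear_combination (-1 : ℝ) * hs2
    · simp [Matrix.mulVec, Matrix.mul_apply, dotProduct, Fin.sum_univ_two, hG,
        hv0, hv1, ← Finset.sum_mul, mul_comm]
      rw [hsum_rb, hsum_bb]
      field_simp
      linear_combination (-1 : ℝ) * hs2
  · funext i
    simp [Matrix.mulVec, dotProduct, Fin.sum_univ_two, hG, hv0, hv1]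
    ring
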